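/- For all natural numbers n, p, l with n, p ≥ 1: 1 + n + p + Σ_{a=0}^{n-1} Σ_{b=0}^{p-1} C(a+b+2, b+1)² = Σ_{a=0}^{n} Σ_{b=0}^{p} C(a+b, a)·C(a+b, b). -/

import Mathlib

theorem K_sum_identity (n p : ℕ) (hn : 1 ≤ n) (hp : 1 ≤ p) :
    1 + n + p + ∑ a ∈ Finset.range n, ∑ b ∈ Finset.range p,
      (Nat.choose (a + b + 2) (b + 1)) ^ 2 =
    ∑ a ∈ Finset.range (n + 1), ∑ b ∈ Finset.range (p + 1),
      Nat.choose (a + b) a * Nat.choose (a + b) b := by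
  rw [Finset.sum_range_succ']
  simp only [Nat.zero_add, Nat.choose_zero_right, Nat.choose_self, one_mul, mul_one,
    Finset.sum_const, Finset.card_range, smul_eq_mul]
  conv_rhs => enter [1, 2, a]; rw [Finset.sum_range_succ']
  simp only [Nat.add_zero, Nat.choose_zero_right, Nat.choose_self, one_mul, mul_one,
    Finset.sum_const, Finset.card_range, smul_eq_mul]
  have key : ∀ a b : ℕ, (Nat.choose (a + b + 2) (b + 1)) ^ 2 =
      Nat.choose (a + 1 + (b + 1)) (a + 1) * Nat.choose (a + 1 + (b + 1)) (b + 1) := by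
    intro a b
    have h : a + 1 + (b + 1) = a + b + 2 := by ring
    rw [h, sq]
    congr 1
    rw [← Nat.choose_symm (by omega : b + 1 ≤ a + b + 2)]
    congr 1; omega
  simp only [key]
  simp only [Finset.sum_add_distrib, Finset.sum_const, Finset.card_range, smul_eq_mul]
  push_cast
  ring_nf
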